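/- arXiv:2207.11220 — 2 statements merged into one kernel-verified Lean document; each statement's English description precedes it below -/
import Mathlib

section
/- Assume the SDARE has at least one symmetric positive semidefinite solution. Then the fixed point iteration X₀ = 0, X_{t+1} = D(X_t) converges (in ℝ^{n×n}) to a symmetric positive semidefinite matrix X∞ satisfying X∞ = D(X∞), and X∞ ⪯ X̂ for every symmetric positive semidefinite solution X̂ of the SDARE; that is, the fixed point iteration converges to the minimal positive semidefinite solution (Theorem on convergence of fixed point iteration for SDAREs, part 2). -/
open Matrix
open scoped Kronecker

/-- The SDARE Riccati operator `D(X) = Aᵀ (X ⊗ I_r) (I + B Bᵀ (X ⊗ I_r))⁻¹ A + Cᵀ C`,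
with `rn` realized as the index type `Fin n × Fin r`. -/
noncomputable def Dop {n m l r : ℕ}
    (A : Matrix (Fin n × Fin r) (Fin n) ℝ)
    (B : Matrix (Fin n × Fin r) (Fin m) ℝ)
    (C : Matrix (Fin l) (Fin n) ℝ)
    (X : Matrix (Fin n) (Fin n) ℝ) : Matrix (Fin n) (Fin n) ℝ :=
  Aᵀ * (X ⊗ₖ (1 : Matrix (Fin r) (Fin r) ℝ)) *
      (1 + B * Bᵀ * (X ⊗ₖ (1 : Matrix (Fin r) (Fin r) ℝ)))⁻¹ * A + Cᵀ * C

/-! ### Auxiliary lemmas -/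

lemma conjT_eq_transpose {α β : Type*} (M : Matrix α β ℝ) : Mᴴ = Mᵀ := by
  ext i j; simp [conjTranspose_apply]

lemma star_pi_real {k : ℕ} (v : Fin k → ℝ) : star v = v := by
  ext i; simp

/-- Kronecker product with the identity. -/
def kr {n : ℕ} (r : ℕ) (X : Matrix (Fin n) (Fin n) ℝ) :
    Matrix (Fin n × Fin r) (Fin n × Fin r) ℝ := X ⊗ₖ (1 : Matrix (Fin r) (Fin r) ℝ)

lemma kr_transpose {n r : ℕ} (X : Matrix (Fin n) (Fin n) ℝ) : (kr r X)ᵀ = kr r Xᵀ := by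
  rw [kr, kr, ← kroneckerMap_transpose, transpose_one]

lemma kr_sub {n r : ℕ} (X Z : Matrix (Fin n) (Fin n) ℝ) : kr r (X - Z) = kr r X - kr r Z := by
  ext i j; simp [kr, kroneckerMap_apply, sub_mul]

open scoped MatrixOrder in
lemma psd_exists_sq {k : Type*} [Fintype k] [DecidableEq k] {X : Matrix k k ℝ} (hX : X.PosSemidef) :
    ∃ L : Matrix k k ℝ, X = Lᴴ * L := by
  obtain ⟨L, hL⟩ := CStarAlgebra.nonneg_iff_eq_star_mul_self.mp hX.nonneg
  exact ⟨L, hL⟩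

lemma kr_psd {n r : ℕ} {X : Matrix (Fin n) (Fin n) ℝ} (hX : X.PosSemidef) :
    (kr r X).PosSemidef := by
  obtain ⟨L, hL⟩ := psd_exists_sq hX
  rw [conjT_eq_transpose] at hL
  have h1 : kr r X = (kr r L)ᴴ * (kr r L) := by
    rw [conjT_eq_transpose, kr_transpose]; simp only [kr]
    rw [← mul_kronecker_mul, one_mul, ← hL]
  rw [h1]; exact posSemidef_conjTranspose_mul_self _

lemma kr_continuous {n r : ℕ} : Continuous (kr r (n := n)) := by
  apply continuous_pi; intro i; apply continuous_pi; intro j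
  show Continuous fun X : Matrix (Fin n) (Fin n) ℝ => (kr r X) i j
  have : ∀ X : Matrix (Fin n) (Fin n) ℝ,
      (kr r X) i j = X i.1 j.1 * (1 : Matrix (Fin r) (Fin r) ℝ) i.2 j.2 := fun X => rfl
  simp only [this]
  exact ((continuous_id.matrix_elem i.1 j.1).mul continuous_const)

lemma psd_conj {α β : Type*} [Fintype α] [Fintype β]
    {Y : Matrix α α ℝ} (hY : Y.PosSemidef)
    (M : Matrix α β ℝ) : (Mᵀ * Y * M).PosSemidef := by
  have := hY.conjTranspose_mul_mul_same M
  rwa [conjT_eq_transpose] at this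

lemma psd_conj' {α β : Type*} [Fintype α] [Fintype β] (M : Matrix α β ℝ) :
    (Mᵀ * M).PosSemidef := by
  have := posSemidef_conjTranspose_mul_self M
  rwa [conjT_eq_transpose] at this

lemma quad_nonneg_of_psd {k : ℕ} {M : Matrix (Fin k) (Fin k) ℝ} (h : M.PosSemidef)
    (v : Fin k → ℝ) : 0 ≤ v ⬝ᵥ (M *ᵥ v) := by
  have := h.dotProduct_mulVec_nonneg v; rwa [star_pi_real] at this

lemma quad_le_of_psd_sub {k : ℕ} {M N : Matrix (Fin k) (Fin k) ℝ}
    (h : (M - N).PosSemidef) (v : Fin k → ℝ) :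
    v ⬝ᵥ (N *ᵥ v) ≤ v ⬝ᵥ (M *ᵥ v) := by
  have := quad_nonneg_of_psd h v
  rw [Matrix.sub_mulVec, dotProduct_sub] at this
  linarith

lemma quad_entry {n : ℕ} (M : Matrix (Fin n) (Fin n) ℝ) (hM : Mᵀ = M) (i j : Fin n) :
    M i j = ((Pi.single i 1 + Pi.single j 1) ⬝ᵥ (M *ᵥ (Pi.single i 1 + Pi.single j 1))
      - Pi.single i 1 ⬝ᵥ (M *ᵥ Pi.single i 1)
      - Pi.single j 1 ⬝ᵥ (M *ᵥ Pi.single j 1)) / 2 := by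
  have hji : M j i = M i j := congrFun (congrFun hM i) j
  have hb : ∀ a b : Fin n, Pi.single a (1 : ℝ) ⬝ᵥ (M *ᵥ Pi.single b 1) = M a b := by
    intro a b; simp [single_dotProduct, Matrix.mulVec_single]
  simp only [Matrix.mulVec_add, dotProduct_add, add_dotProduct, hb, hji]
  ring

section Alg
variable {n m l r : ℕ}
  (A : Matrix (Fin n × Fin r) (Fin n) ℝ)
  (B : Matrix (Fin n × Fin r) (Fin m) ℝ)
  (C : Matrix (Fin l) (Fin n) ℝ)
  {X : Matrix (Fin n) (Fin n) ℝ}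

set_option maxHeartbeats 1000000 in
lemma G_posdef (hX : X.PosSemidef) : (1 + Bᵀ * kr r X * B).PosDef := by
  exact Matrix.PosDef.add_posSemidef Matrix.PosDef.one (psd_conj (kr_psd hX) B)

lemma G_unit (hX : X.PosSemidef) : IsUnit (1 + Bᵀ * kr r X * B).det :=
  (G_posdef B hX).det_pos.ne'.isUnit

lemma M_unit (hX : X.PosSemidef) : IsUnit (1 + B * Bᵀ * kr r X).det := by
  have h : (1 + B * Bᵀ * kr r X).det = (1 + Bᵀ * kr r X * B).det := by
    rw [Matrix.mul_assoc, Matrix.det_one_add_mul_comm]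
  rw [h]; exact G_unit B hX

lemma key_inv (hX : X.PosSemidef) :
    kr r X * (1 + B * Bᵀ * kr r X)⁻¹ =
      kr r X - kr r X * B * (1 + Bᵀ * kr r X * B)⁻¹ * (Bᵀ * kr r X) := by
  set Y := kr r X with hY
  set G := 1 + Bᵀ * Y * B with hGdef
  have hGdet : IsUnit G.det := G_unit B hX
  have hMdet : IsUnit (1 + B * Bᵀ * Y).det := M_unit B hX
  have h1 : Bᵀ * Y * B = G - 1 := by rw [hGdef, add_sub_cancel_left]
  have hZM : (Y - Y * B * G⁻¹ * (Bᵀ * Y)) * (1 + B * Bᵀ * Y) = Y := by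
    have e1 : Y * B * G⁻¹ * (Bᵀ * Y) * (B * Bᵀ * Y)
        = Y * B * (G⁻¹ * (Bᵀ * Y * B)) * (Bᵀ * Y) := by simp only [Matrix.mul_assoc]
    rw [Matrix.sub_mul, Matrix.mul_add, Matrix.mul_add, Matrix.mul_one, Matrix.mul_one,
      e1, h1, Matrix.mul_sub, Matrix.nonsing_inv_mul _ hGdet]
    simp only [Matrix.mul_one, Matrix.mul_sub, Matrix.sub_mul, Matrix.one_mul, Matrix.mul_assoc]
    abel
  calc Y * (1 + B * Bᵀ * Y)⁻¹
      = (Y - Y * B * G⁻¹ * (Bᵀ * Y)) * (1 + B * Bᵀ * Y) * (1 + B * Bᵀ * Y)⁻¹ := by rw [hZM]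
    _ = Y - Y * B * G⁻¹ * (Bᵀ * Y) := Matrix.mul_nonsing_inv_cancel_right _ _ hMdet

lemma Dop_def' : Dop A B C X = Aᵀ * kr r X * (1 + B * Bᵀ * kr r X)⁻¹ * A + Cᵀ * C := rfl

lemma Dop_eq (hX : X.PosSemidef) :
    Dop A B C X = Aᵀ * kr r X * A
      - Aᵀ * kr r X * B * (1 + Bᵀ * kr r X * B)⁻¹ * (Bᵀ * kr r X * A) + Cᵀ * C := by
  rw [Dop_def', Matrix.mul_assoc Aᵀ (kr r X), key_inv B hX]
  simp only [Matrix.mul_sub, Matrix.sub_mul, Matrix.mul_assoc]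

/-- The "completing the square" functional. -/
noncomputable def Phi (A : Matrix (Fin n × Fin r) (Fin n) ℝ)
    (B : Matrix (Fin n × Fin r) (Fin m) ℝ) (C : Matrix (Fin l) (Fin n) ℝ)
    (X : Matrix (Fin n) (Fin n) ℝ) (L : Matrix (Fin m) (Fin n) ℝ) :
    Matrix (Fin n) (Fin n) ℝ :=
  (A + B * L)ᵀ * kr r X * (A + B * L) + Lᵀ * L + Cᵀ * C

lemma Phi_psd (hX : X.PosSemidef) (L : Matrix (Fin m) (Fin n) ℝ) :
    (Phi A B C X L).PosSemidef :=
  ((psd_conj (kr_psd hX) _).add (psd_conj' L)).add (psd_conj' C)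

lemma Phi_decomp (hX : X.PosSemidef) (L : Matrix (Fin m) (Fin n) ℝ) :
    Phi A B C X L = Dop A B C X +
      (L + (1 + Bᵀ * kr r X * B)⁻¹ * (Bᵀ * kr r X * A))ᵀ *
        (1 + Bᵀ * kr r X * B) *
        (L + (1 + Bᵀ * kr r X * B)⁻¹ * (Bᵀ * kr r X * A)) := by
  have hXt : Xᵀ = X := by rw [← conjT_eq_transpose]; exact hX.1
  have hGdet := G_unit B hX
  rw [Dop_eq A B C hX, Phi]
  set Y := kr r X with hY
  have hYt : Yᵀ = Y := by rw [hY, kr_transpose, hXt]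
  set G := 1 + Bᵀ * Y * B with hGdef
  have hGt : Gᵀ = G := by
    rw [hGdef]
    simp [transpose_add, transpose_mul, transpose_transpose, transpose_one, hYt,
      Matrix.mul_assoc]
  have hGit : (G⁻¹)ᵀ = G⁻¹ := by rw [Matrix.transpose_nonsing_inv, hGt]
  have hGG : G⁻¹ * G = 1 := Matrix.nonsing_inv_mul _ hGdet
  have hGG' : G * G⁻¹ = 1 := Matrix.mul_nonsing_inv _ hGdet
  have hcan1 : ∀ W : Matrix (Fin m) (Fin n) ℝ, G * (G⁻¹ * W) = W := fun W => by
    rw [← Matrix.mul_assoc, hGG', Matrix.one_mul]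
  have hcan2 : ∀ W : Matrix (Fin m) (Fin n) ℝ, G⁻¹ * (G * W) = W := fun W => by
    rw [← Matrix.mul_assoc, hGG, Matrix.one_mul]
  simp only [transpose_add, transpose_mul, transpose_transpose, hGit, hYt]
  simp only [Matrix.add_mul, Matrix.mul_add, Matrix.mul_assoc, hcan1, hcan2]
  rw [hGdef]
  simp only [Matrix.mul_add, Matrix.add_mul, Matrix.one_mul, Matrix.mul_one, Matrix.mul_assoc]
  abel

lemma Phi_sub_psd (hX : X.PosSemidef) (L : Matrix (Fin m) (Fin n) ℝ) :
    (Phi A B C X L - Dop A B C X).PosSemidef := by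
  rw [Phi_decomp A B C hX L, add_sub_cancel_left]
  exact psd_conj (G_posdef B hX).posSemidef _

lemma Dop_eq_Phi (hX : X.PosSemidef) :
    Dop A B C X = Phi A B C X (-((1 + Bᵀ * kr r X * B)⁻¹ * (Bᵀ * kr r X * A))) := by
  rw [Phi_decomp A B C hX _, neg_add_cancel]
  simp [Matrix.mul_zero, Matrix.zero_mul, transpose_zero]

lemma Dop_psd (hX : X.PosSemidef) : (Dop A B C X).PosSemidef := by
  rw [Dop_eq_Phi A B C hX]; exact Phi_psd A B C hX _

lemma Dop_mono {X₁ X₂ : Matrix (Fin n) (Fin n) ℝ} (hX1 : X₁.PosSemidef)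
    (hX2 : X₂.PosSemidef) (h12 : (X₂ - X₁).PosSemidef) :
    (Dop A B C X₂ - Dop A B C X₁).PosSemidef := by
  have e2 := Dop_eq_Phi A B C hX2
  set L := -((1 + Bᵀ * kr r X₂ * B)⁻¹ * (Bᵀ * kr r X₂ * A)) with hL
  have key : Dop A B C X₂ - Dop A B C X₁ =
      ((A + B * L)ᵀ * kr r (X₂ - X₁) * (A + B * L)) + (Phi A B C X₁ L - Dop A B C X₁) := by
    rw [e2]
    simp only [Phi, kr_sub, Matrix.mul_sub, Matrix.sub_mul]
    abel
  rw [key]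
  exact (psd_conj (kr_psd h12) _).add (Phi_sub_psd A B C hX1 L)

end Alg

lemma ContinuousAt.matrix_mul' {X : Type*} [TopologicalSpace X] {α β γ : Type*}
    [Fintype β] {f : X → Matrix α β ℝ} {g : X → Matrix β γ ℝ} {x : X}
    (hf : ContinuousAt f x) (hg : ContinuousAt g x) :
    ContinuousAt (fun y => f y * g y) x := by
  have h : (fun y => f y * g y)
      = (fun p : Matrix α β ℝ × Matrix β γ ℝ => p.1 * p.2) ∘ fun y => (f y, g y) := rfl
  rw [h]
  exact ((continuous_fst.matrix_mul continuous_snd).continuousAt).comp (hf.prodMk hg)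

theorem stmt3 {n m l r : ℕ} (hn : 0 < n) (hm : 0 < m) (hl : 0 < l) (hr : 0 < r)
    (A : Matrix (Fin n × Fin r) (Fin n) ℝ)
    (B : Matrix (Fin n × Fin r) (Fin m) ℝ)
    (C : Matrix (Fin l) (Fin n) ℝ)
    (Xseq : ℕ → Matrix (Fin n) (Fin n) ℝ)
    (h0 : Xseq 0 = 0)
    (hstep : ∀ t, Xseq (t + 1) = Dop A B C (Xseq t))
    (hex : ∃ Xhat : Matrix (Fin n) (Fin n) ℝ, Xhat.PosSemidef ∧ Xhat = Dop A B C Xhat) :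
    ∃ Xinf : Matrix (Fin n) (Fin n) ℝ, Xinf.PosSemidef ∧
      Filter.Tendsto Xseq Filter.atTop (nhds Xinf) ∧
      Xinf = Dop A B C Xinf ∧
      ∀ Xhat : Matrix (Fin n) (Fin n) ℝ, Xhat.PosSemidef → Xhat = Dop A B C Xhat →
        (Xhat - Xinf).PosSemidef := by
  obtain ⟨Xhat, hXhat, hfix⟩ := hex
  -- the iteration is PSD and monotone
  have chain : ∀ t, (Xseq t).PosSemidef ∧ (Xseq (t + 1) - Xseq t).PosSemidef := by
    intro t; induction t with
    | zero =>
      constructor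
      · rw [h0]; exact Matrix.PosSemidef.zero
      · rw [hstep 0, h0, sub_zero]; exact Dop_psd A B C Matrix.PosSemidef.zero
    | succ t ih =>
      obtain ⟨h1, h2⟩ := ih
      have hpsd : (Xseq (t + 1)).PosSemidef := by rw [hstep t]; exact Dop_psd A B C h1
      refine ⟨hpsd, ?_⟩
      rw [hstep (t + 1)]
      nth_rewrite 2 [hstep t]
      exact Dop_mono A B C h1 hpsd h2
  -- any PSD solution is an upper bound of the whole iteration
  have hub : ∀ W : Matrix (Fin n) (Fin n) ℝ, W.PosSemidef → W = Dop A B C W →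
      ∀ t, (W - Xseq t).PosSemidef := by
    intro W hW hWfix t
    induction t with
    | zero => rw [h0, sub_zero]; exact hW
    | succ t ih =>
      have h2 := Dop_mono A B C (chain t).1 hW ih
      rw [hstep t, hWfix]
      exact h2
  -- quadratic forms along the iteration
  set e : Fin n → (Fin n → ℝ) := fun i => Pi.single i 1 with he
  set f : (Fin n → ℝ) → ℕ → ℝ := fun v t => v ⬝ᵥ (Xseq t *ᵥ v) with hf
  have fmono : ∀ v, Monotone (f v) := fun v =>
    monotone_nat_of_le_succ fun t => quad_le_of_psd_sub (chain t).2 v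
  have fbdd : ∀ v, BddAbove (Set.range (f v)) := fun v =>
    ⟨v ⬝ᵥ (Xhat *ᵥ v), by
      rintro x ⟨t, rfl⟩; exact quad_le_of_psd_sub (hub Xhat hXhat hfix t) v⟩
  set q : (Fin n → ℝ) → ℝ := fun v => ⨆ t, f v t with hq
  have fconv : ∀ v, Filter.Tendsto (f v) Filter.atTop (nhds (q v)) := fun v =>
    tendsto_atTop_ciSup (fmono v) (fbdd v)
  -- the limit matrix
  set Xinf : Matrix (Fin n) (Fin n) ℝ :=
    Matrix.of fun i j => (q (e i + e j) - q (e i) - q (e j)) / 2 with hXinfdef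
  have hXinfapp : ∀ i j, Xinf i j = (q (e i + e j) - q (e i) - q (e j)) / 2 := fun i j => rfl
  have hsymmt : ∀ t, (Xseq t)ᵀ = Xseq t := fun t => by
    rw [← conjT_eq_transpose]; exact (chain t).1.1
  have hentryf : ∀ t i j, Xseq t i j = (f (e i + e j) t - f (e i) t - f (e j) t) / 2 :=
    fun t i j => quad_entry _ (hsymmt t) i j
  have hentry : ∀ i j, Filter.Tendsto (fun t => Xseq t i j) Filter.atTop (nhds (Xinf i j)) := by
    intro i j
    rw [hXinfapp i j]
    simp only [hentryf]
    exact (((fconv _).sub (fconv _)).sub (fconv _)).div_const 2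
  have hT : Filter.Tendsto Xseq Filter.atTop (nhds Xinf) := by
    apply tendsto_pi_nhds.mpr; intro i; apply tendsto_pi_nhds.mpr; intro j; exact hentry i j
  -- the quadratic form of the limit
  have hquadcont : ∀ v : Fin n → ℝ,
      Continuous fun M : Matrix (Fin n) (Fin n) ℝ => v ⬝ᵥ (M *ᵥ v) := by
    intro v
    simp only [Matrix.mulVec, dotProduct]
    refine continuous_finset_sum _ fun a _ => Continuous.mul continuous_const ?_
    exact continuous_finset_sum _ fun b _ =>
      (continuous_id.matrix_elem a b).mul continuous_const
  have hquad : ∀ v, v ⬝ᵥ (Xinf *ᵥ v) = q v := fun v =>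
    tendsto_nhds_unique (((hquadcont v).tendsto Xinf).comp hT) (fconv v)
  have hXinft : Xinfᵀ = Xinf := by
    ext i j
    show Xinf j i = Xinf i j
    rw [hXinfapp, hXinfapp, add_comm (e j)]
    ring
  have hXinfPSD : Xinf.PosSemidef := by
    refine Matrix.PosSemidef.of_dotProduct_mulVec_nonneg ?_ ?_
    · show Xinfᴴ = Xinf
      rw [conjT_eq_transpose]; exact hXinft
    · intro v
      rw [star_pi_real, hquad v]
      have h00 : f v 0 = 0 := by rw [hf]; simp [h0]
      have hle := le_ciSup (fbdd v) 0
      rw [h00] at hle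
      exact hle
  refine ⟨Xinf, hXinfPSD, hT, ?_, ?_⟩
  · -- fixed point via continuity
    have hMc : Continuous fun X : Matrix (Fin n) (Fin n) ℝ => 1 + B * Bᵀ * kr r X :=
      continuous_const.add (continuous_const.matrix_mul kr_continuous)
    have hdetne : (1 + B * Bᵀ * kr r Xinf).det ≠ 0 := (M_unit B hXinfPSD).ne_zero
    have hinveq : (fun X : Matrix (Fin n) (Fin n) ℝ => (1 + B * Bᵀ * kr r X)⁻¹)
        = fun X => ((1 + B * Bᵀ * kr r X).det)⁻¹ • (1 + B * Bᵀ * kr r X).adjugate := by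
      funext X; rw [Matrix.inv_def, Ring.inverse_eq_inv']
    have hinvAt : ContinuousAt
        (fun X : Matrix (Fin n) (Fin n) ℝ => (1 + B * Bᵀ * kr r X)⁻¹) Xinf := by
      rw [hinveq]
      exact (hMc.matrix_det.continuousAt.inv₀ hdetne).smul hMc.matrix_adjugate.continuousAt
    have hDAt : ContinuousAt (Dop A B C) Xinf := by
      have hD : Dop A B C
          = fun X => Aᵀ * kr r X * (1 + B * Bᵀ * kr r X)⁻¹ * A + Cᵀ * C :=
        funext fun X => Dop_def' A B C
      rw [hD]
      exact ((((continuous_const.matrix_mul kr_continuous).continuousAt.matrix_mul'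
        hinvAt).matrix_mul' continuousAt_const).add continuousAt_const)
    have h1 : Filter.Tendsto (fun t => Xseq (t + 1)) Filter.atTop (nhds Xinf) :=
      hT.comp (Filter.tendsto_add_atTop_nat 1)
    have h2 : Filter.Tendsto (fun t => Dop A B C (Xseq t)) Filter.atTop
        (nhds (Dop A B C Xinf)) := hDAt.tendsto.comp hT
    have h12 : (fun t => Xseq (t + 1)) = fun t => Dop A B C (Xseq t) := funext hstep
    exact tendsto_nhds_unique (by rwa [h12] at h1) h2
  · -- minimality
    intro W hW hWfix
    refine Matrix.PosSemidef.of_dotProduct_mulVec_nonneg ?_ ?_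
    · show (W - Xinf)ᴴ = W - Xinf
      rw [conjT_eq_transpose, transpose_sub, hXinft]
      congr 1
      rw [← conjT_eq_transpose]; exact hW.1
    · intro v
      rw [star_pi_real, Matrix.sub_mulVec, dotProduct_sub, hquad v, sub_nonneg]
      exact ciSup_le fun t => quad_le_of_psd_sub (hub W hW hWfix t) v
end

section
/- Let X⋆, X ∈ ℝ^{n×n} be symmetric such that I_{rn} + BBᵀ(X⋆ ⊗ I_r) and I_{rn} + BBᵀ(X ⊗ I_r) are invertible. Set A⋆ = (I_{rn} + BBᵀ(X⋆ ⊗ I_r))⁻¹A, B⋆ = (I_{rn} + BBᵀ(X⋆ ⊗ I_r))⁻¹BBᵀ, and Δ = X⋆ − X. Then the matrix I_{rn} − B⋆(Δ ⊗ I_r) is invertible and D(X⋆) − D(X) = A⋆ᵀ(Δ ⊗ I_r)(I_{rn} − B⋆(Δ ⊗ I_r))⁻¹A⋆. Moreover, if I_m + Bᵀ(X⋆ ⊗ I_r)B is invertible then B⋆ = B(I_m + Bᵀ(X⋆ ⊗ I_r)B)⁻¹Bᵀ, so B⋆ is symmetric positive semidefinite whenever X⋆ ⪰ 0. -/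
open Matrix
open scoped Kronecker

private lemma sub_kron {n r : ℕ} (P Q : Matrix (Fin n) (Fin n) ℝ) :
    (P - Q) ⊗ₖ (1 : Matrix (Fin r) (Fin r) ℝ) =
      P ⊗ₖ (1 : Matrix (Fin r) (Fin r) ℝ) - Q ⊗ₖ (1 : Matrix (Fin r) (Fin r) ℝ) := by
  ext i j
  simp [Matrix.kroneckerMap_apply, sub_mul]

private lemma kron_psd {n r : ℕ} {P : Matrix (Fin n) (Fin n) ℝ} (hP : P.PosSemidef) :
    (P ⊗ₖ (1 : Matrix (Fin r) (Fin r) ℝ)).PosSemidef := by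
  obtain ⟨Q, hQ⟩ : ∃ Q : Matrix (Fin n) (Fin n) ℝ, P = Qᴴ * Q := by
    open scoped MatrixOrder in exact CStarAlgebra.nonneg_iff_eq_star_mul_self.mp hP.nonneg
  rw [Matrix.conjTranspose_eq_transpose_of_trivial] at hQ
  have key : P ⊗ₖ (1 : Matrix (Fin r) (Fin r) ℝ) =
      (Q ⊗ₖ (1 : Matrix (Fin r) (Fin r) ℝ))ᴴ * (Q ⊗ₖ (1 : Matrix (Fin r) (Fin r) ℝ)) := by
    rw [Matrix.conjTranspose_eq_transpose_of_trivial, ← Matrix.kroneckerMap_transpose,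
      Matrix.transpose_one, ← Matrix.mul_kronecker_mul, Matrix.one_mul, ← hQ]
  rw [key]
  exact Matrix.posSemidef_conjTranspose_mul_self _

theorem stmt4 {n m l r : ℕ} (hn : 0 < n) (hm : 0 < m) (hl : 0 < l) (hr : 0 < r)
    (A : Matrix (Fin n × Fin r) (Fin n) ℝ)
    (B : Matrix (Fin n × Fin r) (Fin m) ℝ)
    (C : Matrix (Fin l) (Fin n) ℝ)
    (Xs X : Matrix (Fin n) (Fin n) ℝ)
    (hXs : Xs.IsHermitian) (hX : X.IsHermitian)
    (hKs : IsUnit (1 + B * Bᵀ * (Xs ⊗ₖ (1 : Matrix (Fin r) (Fin r) ℝ))))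
    (hK : IsUnit (1 + B * Bᵀ * (X ⊗ₖ (1 : Matrix (Fin r) (Fin r) ℝ))))
    (As : Matrix (Fin n × Fin r) (Fin n) ℝ)
    (Bs : Matrix (Fin n × Fin r) (Fin n × Fin r) ℝ)
    (Δ : Matrix (Fin n) (Fin n) ℝ)
    (hAs : As = (1 + B * Bᵀ * (Xs ⊗ₖ (1 : Matrix (Fin r) (Fin r) ℝ)))⁻¹ * A)
    (hBs : Bs = (1 + B * Bᵀ * (Xs ⊗ₖ (1 : Matrix (Fin r) (Fin r) ℝ)))⁻¹ * (B * Bᵀ))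
    (hΔ : Δ = Xs - X) :
    IsUnit (1 - Bs * (Δ ⊗ₖ (1 : Matrix (Fin r) (Fin r) ℝ))) ∧
    Dop A B C Xs - Dop A B C X =
      Asᵀ * (Δ ⊗ₖ (1 : Matrix (Fin r) (Fin r) ℝ)) *
        (1 - Bs * (Δ ⊗ₖ (1 : Matrix (Fin r) (Fin r) ℝ)))⁻¹ * As ∧
    (IsUnit (1 + Bᵀ * (Xs ⊗ₖ (1 : Matrix (Fin r) (Fin r) ℝ)) * B) →
      Bs = B * (1 + Bᵀ * (Xs ⊗ₖ (1 : Matrix (Fin r) (Fin r) ℝ)) * B)⁻¹ * Bᵀ ∧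
      (Xs.PosSemidef → Bs.PosSemidef)) := by
  classical
  set Y : Matrix (Fin n × Fin r) (Fin n × Fin r) ℝ :=
    Xs ⊗ₖ (1 : Matrix (Fin r) (Fin r) ℝ) with hYdef
  set Z : Matrix (Fin n × Fin r) (Fin n × Fin r) ℝ :=
    X ⊗ₖ (1 : Matrix (Fin r) (Fin r) ℝ) with hZdef
  set Ks : Matrix (Fin n × Fin r) (Fin n × Fin r) ℝ := 1 + B * Bᵀ * Y with hKsdef
  set K : Matrix (Fin n × Fin r) (Fin n × Fin r) ℝ := 1 + B * Bᵀ * Z with hKdef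
  have hDY : Δ ⊗ₖ (1 : Matrix (Fin r) (Fin r) ℝ) = Y - Z := by
    rw [hΔ, sub_kron]
  -- symmetry of Y
  have hXsT : Xsᵀ = Xs := by
    have := hXs.eq
    rwa [Matrix.conjTranspose_eq_transpose_of_trivial] at this
  have hYt : Yᵀ = Y := by
    rw [hYdef, ← Matrix.kroneckerMap_transpose, Matrix.transpose_one, hXsT]
  have hKsT : Ksᵀ = 1 + Y * (B * Bᵀ) := by
    rw [hKsdef, Matrix.transpose_add, Matrix.transpose_one, Matrix.transpose_mul,
      Matrix.transpose_mul, Matrix.transpose_transpose, hYt]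
  -- determinant units
  have hKsd : IsUnit Ks.det := (Matrix.isUnit_iff_isUnit_det Ks).mp hKs
  have hKd : IsUnit K.det := (Matrix.isUnit_iff_isUnit_det K).mp hK
  have hKsTd : IsUnit Ksᵀ.det := by rwa [Matrix.det_transpose]
  have hKsKsi : Ks * Ks⁻¹ = 1 := Matrix.mul_nonsing_inv _ hKsd
  have hKsiKs : Ks⁻¹ * Ks = 1 := Matrix.nonsing_inv_mul _ hKsd
  have hKKi : K * K⁻¹ = 1 := Matrix.mul_nonsing_inv _ hKd
  have hKiK : K⁻¹ * K = 1 := Matrix.nonsing_inv_mul _ hKd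
  have hKsTi : Ksᵀ⁻¹ * Ksᵀ = 1 := Matrix.nonsing_inv_mul _ hKsTd
  -- swap lemma : Y * Ks = Ksᵀ * Y
  have hswap : Y * Ks = Ksᵀ * Y := by
    rw [hKsT, hKsdef]
    noncomm_ring
  -- K = Ks - B*Bᵀ*(Y - Z)
  have hKKs : K = Ks - B * Bᵀ * (Y - Z) := by
    rw [hKdef, hKsdef, Matrix.mul_sub]
    abel
  -- 1 - Bs * (Δ⊗1) = Ks⁻¹ * K
  have hkey : 1 - Bs * (Δ ⊗ₖ (1 : Matrix (Fin r) (Fin r) ℝ)) = Ks⁻¹ * K := by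
    rw [hDY, hBs, hKKs, Matrix.mul_sub Ks⁻¹ Ks (B * Bᵀ * (Y - Z)), hKsiKs]
    noncomm_ring
  have hrinv : (Ks⁻¹ * K) * (K⁻¹ * Ks) = 1 := by
    rw [Matrix.mul_assoc, ← Matrix.mul_assoc K, hKKi, Matrix.one_mul, hKsiKs]
  have hUnit : IsUnit (1 - Bs * (Δ ⊗ₖ (1 : Matrix (Fin r) (Fin r) ℝ))) := by
    rw [hkey, Matrix.isUnit_iff_isUnit_det]
    exact Matrix.isUnit_det_of_right_inverse hrinv
  have hinv : (1 - Bs * (Δ ⊗ₖ (1 : Matrix (Fin r) (Fin r) ℝ)))⁻¹ = K⁻¹ * Ks := by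
    rw [hkey]
    exact Matrix.inv_eq_right_inv hrinv
  refine ⟨hUnit, ?_, ?_⟩
  · -- the main difference identity
    have hE : Ksᵀ * (Y * Ks⁻¹ - Z * K⁻¹) * K = Y - Z := by
      have h1 : Ksᵀ * (Y * Ks⁻¹) * K = Y * K := by
        rw [← Matrix.mul_assoc Ksᵀ Y Ks⁻¹, ← hswap, Matrix.mul_assoc Y Ks Ks⁻¹, hKsKsi,
          Matrix.mul_one]
      have h2 : Ksᵀ * (Z * K⁻¹) * K = Ksᵀ * Z := by
        rw [Matrix.mul_assoc, Matrix.mul_assoc, hKiK, Matrix.mul_one]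
      rw [Matrix.mul_sub, Matrix.sub_mul, h1, h2, hKdef, hKsT]
      noncomm_ring
    have hmid : Y * Ks⁻¹ - Z * K⁻¹ = Ksᵀ⁻¹ * (Y - Z) * K⁻¹ := by
      rw [← hE, ← Matrix.mul_assoc, ← Matrix.mul_assoc, hKsTi, Matrix.one_mul,
        Matrix.mul_assoc _ K K⁻¹, hKKi, Matrix.mul_one]
    have hDop : Dop A B C Xs - Dop A B C X = Aᵀ * (Y * Ks⁻¹ - Z * K⁻¹) * A := by
      simp only [Dop, ← hYdef, ← hZdef, ← hKsdef, ← hKdef]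
      rw [Matrix.mul_sub, Matrix.sub_mul, Matrix.mul_assoc Aᵀ Y Ks⁻¹,
        Matrix.mul_assoc Aᵀ Z K⁻¹]
      abel
    rw [hDop, hmid, hinv, hAs, Matrix.transpose_mul, Matrix.transpose_nonsing_inv]
    rw [hDY]
    have h3 : (K⁻¹ * Ks) * (Ks⁻¹ * A) = K⁻¹ * A := by
      rw [Matrix.mul_assoc, ← Matrix.mul_assoc Ks, hKsKsi, Matrix.one_mul]
    rw [Matrix.mul_assoc (Aᵀ * Ksᵀ⁻¹ * (Y - Z)) (K⁻¹ * Ks) (Ks⁻¹ * A), h3]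
    simp [Matrix.mul_assoc]
  · intro hM
    set M : Matrix (Fin m) (Fin m) ℝ := 1 + Bᵀ * Y * B with hMdef
    have hMd : IsUnit M.det := (Matrix.isUnit_iff_isUnit_det M).mp hM
    have hMMi : M * M⁻¹ = 1 := Matrix.mul_nonsing_inv _ hMd
    have hKsB : Ks * B = B * M := by
      rw [hKsdef, hMdef, Matrix.add_mul, Matrix.mul_add, Matrix.one_mul, Matrix.mul_one,
        Matrix.mul_assoc, Matrix.mul_assoc, Matrix.mul_assoc]
    have hBsEq : Bs = B * M⁻¹ * Bᵀ := by
      have h : Ks * (B * M⁻¹ * Bᵀ) = B * Bᵀ := by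
        rw [← Matrix.mul_assoc, ← Matrix.mul_assoc, hKsB, Matrix.mul_assoc B M M⁻¹, hMMi,
          Matrix.mul_one]
      rw [hBs, ← h, ← Matrix.mul_assoc, hKsiKs, Matrix.one_mul]
    refine ⟨hBsEq, fun hPSD => ?_⟩
    have hYpsd : Y.PosSemidef := kron_psd hPSD
    have hMpsd : M.PosSemidef := by
      have hBYB : (Bᵀ * Y * B).PosSemidef := by
        have := hYpsd.conjTranspose_mul_mul_same B
        rwa [Matrix.conjTranspose_eq_transpose_of_trivial] at this
      exact Matrix.PosSemidef.add Matrix.PosSemidef.one hBYB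
    have hMinv : (M⁻¹).PosSemidef := hMpsd.inv
    have := hMinv.mul_mul_conjTranspose_same B
    rwa [Matrix.conjTranspose_eq_transpose_of_trivial, ← hBsEq] at this
end
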